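/- Let f ∈ 𝒟 (the closed span of Koopman eigenfunctions) and g ∈ 𝒟^⊥ be such that the product fg lies in L²(X,μ). Then fg lies in 𝒟^⊥, i.e., fg is orthogonal to every Koopman eigenfunction. -/

import Mathlib

open MeasureTheory Filter

/-- The closed subspace `𝒟` of `L²(X,μ)` spanned by the eigenfunctions of the Koopman
operator `f ↦ f ∘ T`. -/
noncomputable def eigSpan {X : Type*} [MeasurableSpace X] (μ : Measure X) (T : X → X) :
    Submodule ℂ (Lp ℂ 2 μ) :=
  (Submodule.span ℂ {w : Lp ℂ 2 μ | ∃ l : ℂ,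
    (fun x => (w : X → ℂ) (T x)) =ᵐ[μ] fun x => l * (w : X → ℂ) x}).topologicalClosure

/-- An `L²` eigenfunction of the Koopman operator of an ergodic map has a.e. constant modulus. -/
private lemma eig_norm_const {X : Type*} [MeasurableSpace X] {μ : Measure X}
    [IsProbabilityMeasure μ] {T : X → X} (hT : Ergodic T μ)
    {w : Lp ℂ 2 μ} {l : ℂ}
    (hw : (fun x => (w : X → ℂ) (T x)) =ᵐ[μ] fun x => l * (w : X → ℂ) x)
    (hw0 : w ≠ 0) :
    ∃ c : ℝ, 0 ≤ c ∧ (fun x => ‖(w : X → ℂ) x‖) =ᵐ[μ] fun _ => c := by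
  have hwm := Lp.aestronglyMeasurable w
  -- first, |l| = 1
  have h1 : eLpNorm ((w : X → ℂ) ∘ T) 2 μ = eLpNorm (w : X → ℂ) 2 μ :=
    eLpNorm_comp_measurePreserving hwm hT.toMeasurePreserving
  have h2 : eLpNorm ((w : X → ℂ) ∘ T) 2 μ = ‖l‖₊ * eLpNorm (w : X → ℂ) 2 μ := by
    rw [eLpNorm_congr_ae (f := (w : X → ℂ) ∘ T) (g := l • (w : X → ℂ)) hw,
      eLpNorm_const_smul, enorm_eq_nnnorm]
  have hne : eLpNorm (w : X → ℂ) 2 μ ≠ 0 := by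
    intro h
    refine hw0 ?_
    ext1
    filter_upwards [(eLpNorm_eq_zero_iff hwm (by norm_num)).1 h, Lp.coeFn_zero ℂ 2 μ]
      with x hx hx0
    simp [hx, hx0]
  have hnt : eLpNorm (w : X → ℂ) 2 μ ≠ ⊤ := Lp.eLpNorm_ne_top w
  have hl1 : ‖l‖ = 1 := by
    rw [h1] at h2
    have h3 : ((‖l‖₊ : ENNReal)) = 1 :=
      (ENNReal.mul_eq_left hne hnt).1 (by rw [mul_comm]; exact h2.symm)
    have h4 : (‖l‖₊ : NNReal) = 1 := by exact_mod_cast h3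
    rw [← coe_nnnorm l, h4, NNReal.coe_one]
  -- the modulus is a.e. invariant
  have hinv : (fun x => ‖(w : X → ℂ) x‖) ∘ T =ᵐ[μ] fun x => ‖(w : X → ℂ) x‖ := by
    filter_upwards [hw] with x hx
    simp only [Function.comp_apply]
    rw [hx]
    simp [norm_mul, hl1]
  obtain ⟨c, hc⟩ := hT.ae_eq_const_of_ae_eq_comp_ae hwm.norm hinv
  refine ⟨c, ?_, hc⟩
  obtain ⟨x, hx⟩ := hc.exists
  have hx' : ‖(w : X → ℂ) x‖ = c := hx
  rw [← hx']
  exact norm_nonneg _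

/-- If `f ∈ 𝒟`, `g ∈ 𝒟^⊥`, and the product `f * g` lies in `L²`, then `f * g ∈ 𝒟^⊥`. -/
theorem product_discrete_continuous_in_continuous
    {X : Type*} [MeasurableSpace X] (μ : Measure X) [IsProbabilityMeasure μ]
    (T : X → X) (hT : Ergodic T μ)
    (S : X → X) (hS : MeasurePreserving S μ μ)
    (hST : Function.LeftInverse S T) (hTS : Function.RightInverse S T)
    (f g : X → ℂ) (hf : MemLp f 2 μ) (hg : MemLp g 2 μ)
    (hfg : MemLp (fun x => f x * g x) 2 μ)
    (hfD : hf.toLp f ∈ eigSpan μ T)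
    (hgD : hg.toLp g ∈ (eigSpan μ T)ᗮ) :
    hfg.toLp (fun x => f x * g x) ∈ (eigSpan μ T)ᗮ := by
  classical
  set Sset : Set (Lp ℂ 2 μ) := {w : Lp ℂ 2 μ | ∃ l : ℂ,
    (fun x => (w : X → ℂ) (T x)) =ᵐ[μ] fun x => l * (w : X → ℂ) x} with hSset
  set p : Lp ℂ 2 μ := hfg.toLp (fun x => f x * g x) with hp
  have key : ∀ w ∈ Sset, (inner ℂ w p : ℂ) = 0 := by
    rintro w ⟨l, hwl⟩
    by_cases hw0 : w = 0
    · rw [hw0]; exact inner_zero_left _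
    obtain ⟨c, hc0, hc⟩ := eig_norm_const hT hwl hw0
    -- `Q = w * conj g ∈ L²`
    set Q : X → ℂ := fun x => (w : X → ℂ) x * (starRingEnd ℂ) (g x) with hQdef
    have hQm : AEStronglyMeasurable Q μ :=
      (Lp.aestronglyMeasurable w).mul
        (Complex.continuous_conj.comp_aestronglyMeasurable hg.aestronglyMeasurable)
    have hQ : MemLp Q 2 μ := by
      refine MemLp.of_le (hg.const_mul (c : ℂ)) hQm ?_
      filter_upwards [hc] with x hx
      rw [norm_mul, RCLike.norm_conj, hx, norm_mul, Complex.norm_real, Real.norm_eq_abs, abs_of_nonneg hc0]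
    -- `⟪w, fg⟫ = ⟪Q, f⟫`
    have hA : (inner ℂ w p : ℂ) = inner ℂ (hQ.toLp Q) (hf.toLp f) := by
      rw [L2.inner_def, L2.inner_def]
      refine integral_congr_ae ?_
      filter_upwards [hfg.coeFn_toLp, hf.coeFn_toLp, hQ.coeFn_toLp] with x h1 h2' h3
      simp only [RCLike.inner_apply, hp, h1, h2', h3]
      simp only [RCLike.inner_apply, h1, h2', h3, hQdef, map_mul, Complex.conj_conj]
      ring
    -- eigSpan is orthogonal to `Q`
    have hB : eigSpan μ T ≤ (ℂ ∙ (hQ.toLp Q))ᗮ := by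
      show (Submodule.span ℂ Sset).topologicalClosure ≤ _
      refine Submodule.topologicalClosure_minimal _ (Submodule.span_le.2 ?_)
        (Submodule.isClosed_orthogonal _)
      rintro v ⟨m, hvm⟩
      refine Submodule.mem_orthogonal_singleton_iff_inner_right.2 ?_
      -- `U = conj v * w ∈ L²` is an eigenfunction
      set U : X → ℂ := fun x => (starRingEnd ℂ) ((v : X → ℂ) x) * (w : X → ℂ) x with hUdef
      have hUm : AEStronglyMeasurable U μ :=
        (Complex.continuous_conj.comp_aestronglyMeasurable (Lp.aestronglyMeasurable v)).mul
          (Lp.aestronglyMeasurable w)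
      have hU : MemLp U 2 μ := by
        refine MemLp.of_le ((Lp.memLp v).const_mul (c : ℂ)) hUm ?_
        filter_upwards [hc] with x hx
        rw [norm_mul, RCLike.norm_conj, hx, norm_mul, Complex.norm_real, Real.norm_eq_abs, abs_of_nonneg hc0,
          mul_comm]
      have hUS : hU.toLp U ∈ Sset := by
        refine ⟨(starRingEnd ℂ) m * l, ?_⟩
        have h2 : (fun x => (hU.toLp U : X → ℂ) (T x)) =ᵐ[μ] fun x => U (T x) :=
          hT.toMeasurePreserving.quasiMeasurePreserving.ae_eq_comp hU.coeFn_toLp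
        refine h2.trans ?_
        filter_upwards [hvm, hwl, hU.coeFn_toLp] with x h1 h2' h3
        show U (T x) = _ * (hU.toLp U : X → ℂ) x
        rw [h3]
        simp only [hUdef]
        rw [h1, h2', map_mul]
        ring
      have hUmem : hU.toLp U ∈ eigSpan μ T :=
        Submodule.le_topologicalClosure _ (Submodule.subset_span hUS)
      have hz : (inner ℂ (hU.toLp U) (hg.toLp g) : ℂ) = 0 :=
        (Submodule.mem_orthogonal _ _).1 hgD _ hUmem
      calc (inner ℂ (hQ.toLp Q) v : ℂ) = inner ℂ (hU.toLp U) (hg.toLp g) := by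
            rw [L2.inner_def, L2.inner_def]
            refine integral_congr_ae ?_
            filter_upwards [hQ.coeFn_toLp, hU.coeFn_toLp, hg.coeFn_toLp] with x h1 h2' h3
            simp only [RCLike.inner_apply, h1, h2', h3]
            simp only [RCLike.inner_apply, h1, h2', h3, hQdef, hUdef, map_mul, Complex.conj_conj]
            ring
        _ = 0 := hz
    have hf0 : (inner ℂ (hQ.toLp Q) (hf.toLp f) : ℂ) = 0 :=
      Submodule.mem_orthogonal_singleton_iff_inner_right.1 (hB hfD)
    rw [hA, hf0]
  rw [Submodule.mem_orthogonal]
  intro u hu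
  have hle : eigSpan μ T ≤ (ℂ ∙ p)ᗮ := by
    show (Submodule.span ℂ Sset).topologicalClosure ≤ _
    refine Submodule.topologicalClosure_minimal _ (Submodule.span_le.2 ?_)
      (Submodule.isClosed_orthogonal _)
    intro w hw
    exact Submodule.mem_orthogonal_singleton_iff_inner_left.2 (key w hw)
  exact Submodule.mem_orthogonal_singleton_iff_inner_left.1 (hle hu)
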